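/- Let X be a u.l.f. metric space with basepoint x₀, and define X_n^e, X_n^o as the annuli with radii [2^{6n+1}, 2^{6n+5}] and [2^{6n+4}, 2^{6n+8}] respectively. Then for every slowly oscillating contraction g : X → 𝔻 there exist slowly oscillating functions g_e, g_o with supp(g_e) ⊆ ⋃_n X_n^e, supp(g_o) ⊆ ⋃_n X_n^o, such that g − g_e − g_o vanishes at infinity; moreover if x ∈ X_n^e satisfies |g_e(x)| ≥ 1/2 then d(x, X ∖ X_n^e) ≥ n, and similarly for g_o. -/

import Mathlib

noncomputable def frc (t : ℝ) : ℝ := t - 6 * ⌊t / 6⌋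
noncomputable def del (t : ℝ) : ℝ := min (frc t) (6 - frc t)
noncomputable def lam (t : ℝ) : ℝ := max 0 (min 1 (del t - 1))

lemma frc_nonneg (t : ℝ) : 0 ≤ frc t := by
  have := Int.floor_le (t / 6)
  simp only [frc]; linarith
lemma frc_lt (t : ℝ) : frc t < 6 := by
  have := Int.lt_floor_add_one (t / 6)
  simp only [frc]; linarith

lemma frc_eq (t : ℝ) (n : ℤ) (h1 : 6 * n ≤ t) (h2 : t < 6 * n + 6) : frc t = t - 6 * n := by
  have hn : ⌊t / 6⌋ = n := by
    rw [Int.floor_eq_iff]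
    constructor
    · linarith
    · push_cast; linarith
  simp [frc, hn]

lemma del_le_abs (t : ℝ) (k : ℤ) : del t ≤ |t - 6 * k| := by
  rcases le_or_gt k ⌊t / 6⌋ with h | h
  · have h' : (k : ℝ) ≤ ⌊t / 6⌋ := by exact_mod_cast h
    have h0 := frc_nonneg t
    have hle : frc t ≤ t - 6 * k := by simp only [frc] at *; linarith
    calc del t ≤ frc t := min_le_left _ _
      _ ≤ t - 6 * k := hle
      _ ≤ |t - 6 * k| := le_abs_self _
  · have h' : (⌊t / 6⌋ : ℝ) + 1 ≤ k := by exact_mod_cast h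
    have hle : 6 - frc t ≤ 6 * k - t := by simp only [frc] at *; linarith
    have h0 := neg_abs_le (t - 6 * (k : ℝ))
    calc del t ≤ 6 - frc t := min_le_right _ _
      _ ≤ 6 * k - t := hle
      _ ≤ |t - 6 * k| := by linarith

lemma exists_del (t : ℝ) : ∃ k : ℤ, del t = |t - 6 * k| := by
  rcases le_total (frc t) (6 - frc t) with h | h
  · refine ⟨⌊t / 6⌋, ?_⟩
    rw [del, min_eq_left h,
      abs_of_nonneg (by have := frc_nonneg t; simpa [frc] using this)]
    rfl
  · refine ⟨⌊t / 6⌋ + 1, ?_⟩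
    have h6 := frc_lt t
    rw [del, min_eq_right h,
      abs_of_nonpos (by push_cast; simp only [frc] at h6 ⊢; linarith)]
    push_cast
    simp only [frc] at *; ring

lemma del_lip (t t' : ℝ) : |del t - del t'| ≤ |t - t'| := by
  have habs : |t' - t| = |t - t'| := abs_sub_comm _ _
  rw [abs_sub_le_iff]
  constructor
  · obtain ⟨k, hk⟩ := exists_del t'
    have h1 := del_le_abs t k
    have h2 : |t - 6 * k| ≤ |t - t'| + |t' - 6 * k| := by
      calc |t - 6 * k| = |(t - t') + (t' - 6 * k)| := by ring_nf
        _ ≤ _ := abs_add_le _ _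
    linarith
  · obtain ⟨k, hk⟩ := exists_del t
    have h1 := del_le_abs t' k
    have h2 : |t' - 6 * k| ≤ |t' - t| + |t - 6 * k| := by
      calc |t' - 6 * k| = |(t' - t) + (t - 6 * k)| := by ring_nf
        _ ≤ _ := abs_add_le _ _
    linarith

lemma lam_nonneg (t : ℝ) : 0 ≤ lam t := le_max_left _ _
lemma lam_le_one (t : ℝ) : lam t ≤ 1 := by
  simp only [lam]
  rcases le_total (min 1 (del t - 1)) 0 with h | h
  · rw [max_eq_left h]; norm_num
  · rw [max_eq_right h]; exact min_le_left _ _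

lemma lam_lip (t t' : ℝ) : |lam t - lam t'| ≤ |t - t'| := by
  have h := del_lip t t'
  rw [abs_le] at h ⊢
  obtain ⟨ha, hb⟩ := h
  simp only [lam]
  constructor <;>
  · simp only [max_def, min_def]
    split_ifs <;> linarith [abs_nonneg (t - t')]

lemma del_sub_three (t : ℝ) : del (t - 3) = |frc t - 3| := by
  have h0 := frc_nonneg t
  have h6 := frc_lt t
  have hfl : frc t = t - 6 * ⌊t / 6⌋ := rfl
  rcases le_or_gt 3 (frc t) with h | h
  · have hf : frc (t - 3) = frc t - 3 := by
      rw [frc_eq (t - 3) ⌊t / 6⌋ (by push_cast; linarith) (by push_cast; linarith), hfl]; ring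
    rw [del, hf, abs_of_nonneg (by linarith), min_eq_left (by linarith)]
  · have hf : frc (t - 3) = frc t + 3 := by
      rw [frc_eq (t - 3) (⌊t / 6⌋ - 1) (by push_cast; linarith) (by push_cast; linarith), hfl]
      push_cast; ring
    rw [del, hf, abs_of_nonpos (by linarith), min_eq_right (by linarith)]
    ring

lemma lam_add (t : ℝ) : lam t + lam (t - 3) = 1 := by
  have h0 := frc_nonneg t
  have h6 := frc_lt t
  simp only [lam]
  rw [del_sub_three t]
  rcases le_or_gt 3 (frc t) with h | h
  · rw [abs_of_nonneg (by linarith)]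
    simp only [del, max_def, min_def]; split_ifs <;> linarith
  · rw [abs_of_nonpos (by linarith)]
    simp only [del, max_def, min_def]; split_ifs <;> linarith

lemma lam_pos_frc {t : ℝ} (h : 0 < lam t) : 1 < frc t ∧ frc t < 5 := by
  have h1 : 1 < del t := by
    by_contra hc
    push_neg at hc
    have : lam t ≤ 0 := by
      simp only [lam]
      apply max_le le_rfl
      exact le_trans (min_le_right _ _) (by linarith)
    linarith
  rw [del, lt_min_iff] at h1
  exact ⟨h1.1, by linarith [h1.2]⟩

lemma lam_half {t : ℝ} (h : 1/2 ≤ lam t) : 3/2 ≤ frc t ∧ frc t ≤ 9/2 := by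
  have h2 : 3/2 ≤ del t := by
    by_contra hc
    push_neg at hc
    have hle : lam t ≤ max 0 (del t - 1) := max_le_max le_rfl (min_le_right _ _)
    have hlt : max 0 (del t - 1) < 1/2 := max_lt (by norm_num) (by linarith)
    linarith
  rw [del, le_min_iff] at h2
  exact ⟨h2.1, by linarith [h2.2]⟩

lemma natbound (n : ℕ) : (n : ℝ) ≤ 4/5 * 2 ^ (6 * n) := by
  induction n with
  | zero => norm_num
  | succ k ih =>
    have h1 : (1:ℝ) ≤ 2 ^ (6 * k) := one_le_pow₀ (by norm_num)
    have h2 : (2:ℝ) ^ (6 * (k + 1)) = 64 * 2 ^ (6 * k) := by ring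
    push_cast
    rw [h2]
    push_cast at ih
    nlinarith


lemma logb_two_pow (m : ℕ) : Real.logb 2 ((2:ℝ) ^ m) = m := by
  rw [← Real.rpow_natCast 2 m, Real.logb_rpow (by norm_num) (by norm_num)]

lemma le_logb {m : ℕ} {d : ℝ} (h : (2:ℝ)^m ≤ d) : (m:ℝ) ≤ Real.logb 2 d := by
  have hp : (0:ℝ) < 2^m := by positivity
  rw [← logb_two_pow m]
  exact (Real.logb_le_logb one_lt_two hp (lt_of_lt_of_le hp h)).mpr h

lemma logb_le {m : ℕ} {d : ℝ} (hd : 0 < d) (h : d ≤ (2:ℝ)^m) : Real.logb 2 d ≤ m := by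
  rw [← logb_two_pow m]
  exact (Real.logb_le_logb one_lt_two hd (by positivity)).mpr h

lemma rpow_le_d {d : ℝ} (hd : 0 < d) {s : ℝ} (h : s ≤ Real.logb 2 d) : (2:ℝ)^s ≤ d := by
  calc (2:ℝ)^s ≤ 2 ^ Real.logb 2 d := Real.rpow_le_rpow_of_exponent_le one_le_two h
    _ = d := Real.rpow_logb (by norm_num) (by norm_num) hd

lemma d_le_rpow {d : ℝ} (hd : 0 < d) {s : ℝ} (h : Real.logb 2 d ≤ s) : d ≤ (2:ℝ)^s := by
  calc d = 2 ^ Real.logb 2 d := (Real.rpow_logb (by norm_num) (by norm_num) hd).symm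
    _ ≤ (2:ℝ)^s := Real.rpow_le_rpow_of_exponent_le one_le_two h

lemma pow_le_dist {d : ℝ} (hd : 0 < d) (m : ℕ) (h : (m:ℝ) ≤ Real.logb 2 d) : (2:ℝ)^m ≤ d := by
  rw [← Real.rpow_natCast 2 m]; exact rpow_le_d hd h

lemma dist_le_pow {d : ℝ} (hd : 0 < d) (m : ℕ) (h : Real.logb 2 d ≤ m) : d ≤ (2:ℝ)^m := by
  rw [← Real.rpow_natCast 2 m]; exact d_le_rpow hd h

lemma sqrt2_lb : (7/5 : ℝ) ≤ (2:ℝ) ^ (1/2 : ℝ) := by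
  rw [← Real.sqrt_eq_rpow]
  rw [show (7/5:ℝ) = Real.sqrt ((7/5)^2) by rw [Real.sqrt_sq (by norm_num)]]
  exact Real.sqrt_le_sqrt (by norm_num)

lemma sqrt2_ub : (2:ℝ) ^ (1/2 : ℝ) ≤ 3/2 := by
  rw [← Real.sqrt_eq_rpow]
  rw [show (3/2:ℝ) = Real.sqrt ((3/2)^2) by rw [Real.sqrt_sq (by norm_num)]]
  exact Real.sqrt_le_sqrt (by norm_num)

lemma rpow_split (m : ℕ) : (2:ℝ)^((m:ℝ)+1/2) = 2^m * 2^(1/2:ℝ) := by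
  rw [Real.rpow_add two_pos, Real.rpow_natCast]

lemma gap_low (n m : ℕ) (hm : 6*n+1 ≤ m) {dx dz : ℝ} (hdx : (2:ℝ)^((m:ℝ)+1/2) ≤ dx)
    (hdz : dz < (2:ℝ)^m) : (n:ℝ) ≤ dx - dz := by
  rw [rpow_split m] at hdx
  have h2 := sqrt2_lb
  have hp : (0:ℝ) < 2^m := by positivity
  have hnm : (2:ℝ)^(6*n+1) ≤ 2^m := pow_le_pow_right₀ one_le_two hm
  have hsplit : (2:ℝ)^(6*n+1) = 2 * 2^(6*n) := by ring
  have hb := natbound n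
  nlinarith [mul_le_mul_of_nonneg_left h2 hp.le]

lemma gap_high (n m : ℕ) (hm : 6*n+1 ≤ m) {dx dz : ℝ} (hdx : dx ≤ (2:ℝ)^((m:ℝ)+1/2))
    (hdz : (2:ℝ)^(m+1) < dz) : (n:ℝ) ≤ dz - dx := by
  rw [rpow_split m] at hdx
  rw [pow_succ] at hdz
  have h2 := sqrt2_ub
  have hp : (0:ℝ) < 2^m := by positivity
  have hnm : (2:ℝ)^(6*n+1) ≤ 2^m := pow_le_pow_right₀ one_le_two hm
  have hsplit : (2:ℝ)^(6*n+1) = 2 * 2^(6*n) := by ring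
  have hb := natbound n
  nlinarith [mul_le_mul_of_nonneg_left h2 hp.le]

def SlowlyOscillating {X : Type*} [MetricSpace X] (f : X → ℂ) : Prop :=
  (∃ C : ℝ, ∀ x, ‖f x‖ ≤ C) ∧
  ∀ ε : ℝ, 0 < ε → ∀ R : ℝ, 0 < R → ∃ F : Set X, F.Finite ∧
    ∀ x x', x ∉ F → x' ∉ F → dist x x' ≤ R → ‖f x - f x'‖ < ε

lemma so_aux {X : Type*} [MetricSpace X]
    (hX : ∀ (x : X) (r : ℝ), (Metric.closedBall x r).Finite) (x₀ : X)
    (g : X → ℂ) (hso : SlowlyOscillating g) (hcontr : ∀ x, ‖g x‖ ≤ 1)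
    (c a : ℝ) :
    SlowlyOscillating (fun x =>
      if dist x x₀ < c then 0 else (lam (Real.logb 2 (dist x x₀) + a) : ℂ) * g x) := by
  constructor
  · refine ⟨1, fun x => ?_⟩
    by_cases hx : dist x x₀ < c
    · simp [hx]
    · simp only [hx, if_false, norm_mul, Complex.norm_real, Real.norm_eq_abs]
      have h1 := lam_nonneg (Real.logb 2 (dist x x₀) + a)
      have h2 := lam_le_one (Real.logb 2 (dist x x₀) + a)
      have := hcontr x
      calc |lam (Real.logb 2 (dist x x₀) + a)| * ‖g x‖
          ≤ 1 * 1 := by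
            apply mul_le_mul _ (hcontr x) (norm_nonneg _) zero_le_one
            rw [abs_of_nonneg h1]; exact h2
        _ = 1 := by norm_num
  · intro ε hε R hR
    obtain ⟨F₁, hF₁fin, hF₁⟩ := hso.2 (ε/2) (by linarith) R hR
    set D : ℝ := (2:ℝ) ^ (ε/2 : ℝ) - 1 with hDdef
    have hD0 : 0 < D := by
      have h1 : (1:ℝ) < (2:ℝ) ^ (ε/2 : ℝ) :=
        Real.one_lt_rpow_iff (by norm_num) |>.mpr (Or.inl ⟨one_lt_two, by linarith⟩)
      simp only [hDdef]; linarith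
    set M : ℝ := max (max c 1) (2 * R / D) with hMdef
    have hM1 : 1 ≤ M := le_trans (le_max_right c 1) (le_max_left _ _)
    have hMc : c ≤ M := le_trans (le_max_left c 1) (le_max_left _ _)
    have hMR : 2 * R / D ≤ M := le_max_right _ _
    have hM0 : 0 < M := by linarith
    clear_value D M
    -- key : log difference small
    have key : ∀ d1 d2 : ℝ, M < d1 → M < d2 → d1 ≤ d2 + R →
        Real.logb 2 d1 - Real.logb 2 d2 < ε/2 := by
      intro d1 d2 h1 h2 h12
      have hd1 : 0 < d1 := by linarith
      have hd2 : 0 < d2 := by linarith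
      have hRM : R / M ≤ D / 2 := by
        have hh := mul_le_mul_of_nonneg_right hMR hD0.le
        have heq : 2 * R / D * D = 2 * R := by field_simp
        rw [div_le_div_iff₀ hM0 (by norm_num : (0:ℝ) < 2)]
        nlinarith [hh, heq]
      have hstep : d1 ≤ d2 * (1 + R / M) := by
        have : R ≤ d2 * (R / M) := by
          rw [mul_div_assoc']
          rw [le_div_iff₀ hM0]
          nlinarith
        nlinarith
      have hpos : (0:ℝ) < 1 + R / M := by positivity
      have hlog1 : Real.logb 2 d1 ≤ Real.logb 2 (d2 * (1 + R / M)) :=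
        (Real.logb_le_logb one_lt_two hd1 (by positivity)).mpr hstep
      rw [Real.logb_mul (ne_of_gt hd2) (ne_of_gt hpos)] at hlog1
      have hlog2 : Real.logb 2 (1 + R / M) < ε / 2 := by
        have h2' : 1 + R / M < (2:ℝ) ^ (ε/2 : ℝ) := by simp only [hDdef] at hRM ⊢; linarith [div_pos hR hM0]
        calc Real.logb 2 (1 + R / M) < Real.logb 2 ((2:ℝ) ^ (ε/2 : ℝ)) := by
              apply Real.logb_lt_logb one_lt_two hpos h2'
          _ = ε / 2 := Real.logb_rpow (by norm_num) (by norm_num)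
      linarith
    refine ⟨F₁ ∪ Metric.closedBall x₀ M, hF₁fin.union (hX x₀ M), ?_⟩
    intro x x' hx hx' hdist
    simp only [Set.mem_union, Metric.mem_closedBall, not_or, not_le] at hx hx'
    obtain ⟨hx1, hx2⟩ := hx
    obtain ⟨hx1', hx2'⟩ := hx'
    beta_reduce
    rw [if_neg (by linarith), if_neg (by linarith)]
    set t1 := Real.logb 2 (dist x x₀) + a
    set t2 := Real.logb 2 (dist x' x₀) + a
    have ht : |lam t1 - lam t2| < ε / 2 := by
      have h1 : |t1 - t2| < ε / 2 := by
        have hd : |dist x x₀ - dist x' x₀| ≤ R :=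
          le_trans (abs_dist_sub_le x x' x₀) hdist
        rw [abs_le] at hd
        rw [abs_lt]
        constructor
        · have := key (dist x' x₀) (dist x x₀) hx2' hx2 (by linarith)
          simp only [t1, t2]; linarith
        · have := key (dist x x₀) (dist x' x₀) hx2 hx2' (by linarith)
          simp only [t1, t2]; linarith
      linarith [lam_lip t1 t2]
    have hgg : ‖g x - g x'‖ < ε / 2 := hF₁ x x' hx1 hx1' hdist
    have hid : (lam t1 : ℂ) * g x - (lam t2 : ℂ) * g x'
        = ((lam t1 - lam t2 : ℝ) : ℂ) * g x + (lam t2 : ℂ) * (g x - g x') := by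
      push_cast; ring
    rw [hid]
    calc ‖((lam t1 - lam t2 : ℝ) : ℂ) * g x + (lam t2 : ℂ) * (g x - g x')‖
        ≤ ‖((lam t1 - lam t2 : ℝ) : ℂ) * g x‖ + ‖(lam t2 : ℂ) * (g x - g x')‖ :=
          norm_add_le _ _
      _ = |lam t1 - lam t2| * ‖g x‖ + |lam t2| * ‖g x - g x'‖ := by
          rw [norm_mul, norm_mul, Complex.norm_real, Complex.norm_real, Real.norm_eq_abs, Real.norm_eq_abs]
      _ ≤ |lam t1 - lam t2| * 1 + 1 * ‖g x - g x'‖ := by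
          gcongr
          · exact hcontr x
          · rw [abs_of_nonneg (lam_nonneg t2)]; exact lam_le_one t2
      _ < ε / 2 + ε / 2 := by
          rw [mul_one, one_mul]; exact add_lt_add ht hgg
      _ = ε := by ring

def VanishesAtInfinity {X : Type*} (f : X → ℂ) : Prop :=
  ∀ ε : ℝ, 0 < ε → {x : X | ε ≤ ‖f x‖}.Finite

/-- Decomposition of a slowly oscillating contraction along the even/odd annuli:
`g = g_e + g_o` modulo functions vanishing at infinity, with `g_e, g_o` slowly
oscillating, supported on the even resp. odd annuli, and such that any point where
`|g_i| ≥ 1/2` lies deep (at distance ≥ n from the complement) inside its annulus. -/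
theorem decomposition_even_odd {X : Type*} [MetricSpace X]
    (hX : ∀ (x : X) (r : ℝ), (Metric.closedBall x r).Finite) (x₀ : X)
    (g : X → ℂ) (hso : SlowlyOscillating g) (hcontr : ∀ x, ‖g x‖ ≤ 1) :
    let Xe : ℕ → Set X := fun n =>
      {x | (2 : ℝ) ^ (6 * n + 1) ≤ dist x x₀ ∧ dist x x₀ ≤ (2 : ℝ) ^ (6 * n + 5)}
    let Xo : ℕ → Set X := fun n =>
      {x | (2 : ℝ) ^ (6 * n + 4) ≤ dist x x₀ ∧ dist x x₀ ≤ (2 : ℝ) ^ (6 * n + 8)}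
    ∃ ge go : X → ℂ,
      SlowlyOscillating ge ∧ SlowlyOscillating go ∧
      (∀ x, ge x ≠ 0 → x ∈ ⋃ n, Xe n) ∧
      (∀ x, go x ≠ 0 → x ∈ ⋃ n, Xo n) ∧
      VanishesAtInfinity (fun x => g x - ge x - go x) ∧
      (∀ (n : ℕ) (x : X), x ∈ Xe n → 1 / 2 ≤ ‖ge x‖ →
        ∀ z : X, z ∉ Xe n → (n : ℝ) ≤ dist x z) ∧
      (∀ (n : ℕ) (x : X), x ∈ Xo n → 1 / 2 ≤ ‖go x‖ →
        ∀ z : X, z ∉ Xo n → (n : ℝ) ≤ dist x z) := by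
  intro Xe Xo
  have hXe : ∀ (n : ℕ) (x : X), x ∈ Xe n ↔
      ((2:ℝ)^(6*n+1) ≤ dist x x₀ ∧ dist x x₀ ≤ (2:ℝ)^(6*n+5)) := fun n x => Iff.rfl
  have hXo : ∀ (n : ℕ) (x : X), x ∈ Xo n ↔
      ((2:ℝ)^(6*n+4) ≤ dist x x₀ ∧ dist x x₀ ≤ (2:ℝ)^(6*n+8)) := fun n x => Iff.rfl
  refine ⟨fun x => if dist x x₀ < 2 then 0 else (lam (Real.logb 2 (dist x x₀) + 0) : ℂ) * g x,
          fun x => if dist x x₀ < 16 then 0 else (lam (Real.logb 2 (dist x x₀) + (-3)) : ℂ) * g x,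
          so_aux hX x₀ g hso hcontr 2 0, so_aux hX x₀ g hso hcontr 16 (-3), ?_, ?_, ?_, ?_, ?_⟩
  · -- support even
    intro x hx
    by_cases hd : dist x x₀ < 2
    · simp [hd] at hx
    · push_neg at hd
      simp only [if_neg (not_lt.mpr hd), mul_ne_zero_iff, ne_eq, Complex.ofReal_eq_zero] at hx
      have hd0 : (0:ℝ) < dist x x₀ := by linarith
      set t := Real.logb 2 (dist x x₀) with htdef
      rw [add_zero] at hx
      have hpos : 0 < lam t := lt_of_le_of_ne (lam_nonneg _) (Ne.symm hx.1)
      obtain ⟨hf1, hf5⟩ := lam_pos_frc hpos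
      have ht1 : (1:ℝ) ≤ t := by
        have := le_logb (m := 1) (d := dist x x₀) (by simpa using hd)
        simpa using this
      have hfl0 : (0:ℤ) ≤ ⌊t / 6⌋ := Int.floor_nonneg.mpr (by linarith)
      set n : ℕ := (⌊t / 6⌋).toNat with hndef
      have hkn : ((n:ℤ):ℝ) = ((⌊t / 6⌋ : ℤ) : ℝ) := by
        rw [hndef, Int.toNat_of_nonneg hfl0]
      have hfrc : frc t = t - 6 * (⌊t / 6⌋ : ℝ) := rfl
      have htl : (6*n+1 : ℝ) < t := by push_cast at hkn ⊢; rw [hfrc] at hf1; linarith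
      have htu : t < (6*n+5 : ℝ) := by push_cast at hkn ⊢; rw [hfrc] at hf5; linarith
      refine Set.mem_iUnion.mpr ⟨n, (hXe n x).mpr ⟨?_, ?_⟩⟩
      · exact pow_le_dist hd0 (6*n+1) (by push_cast; linarith)
      · exact dist_le_pow hd0 (6*n+5) (by push_cast; linarith)
  · -- support odd
    intro x hx
    by_cases hd : dist x x₀ < 16
    · simp [hd] at hx
    · push_neg at hd
      simp only [if_neg (not_lt.mpr hd), mul_ne_zero_iff, ne_eq, Complex.ofReal_eq_zero] at hx
      have hd0 : (0:ℝ) < dist x x₀ := by linarith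
      set t := Real.logb 2 (dist x x₀) + (-3) with htdef
      have hpos : 0 < lam t := lt_of_le_of_ne (lam_nonneg _) (Ne.symm hx.1)
      obtain ⟨hf1, hf5⟩ := lam_pos_frc hpos
      have ht1 : (1:ℝ) ≤ t := by
        have := le_logb (m := 4) (d := dist x x₀) (by norm_num; linarith)
        rw [htdef]; push_cast at this; linarith
      have hfl0 : (0:ℤ) ≤ ⌊t / 6⌋ := Int.floor_nonneg.mpr (by linarith)
      set n : ℕ := (⌊t / 6⌋).toNat with hndef
      have hkn : ((n:ℤ):ℝ) = ((⌊t / 6⌋ : ℤ) : ℝ) := by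
        rw [hndef, Int.toNat_of_nonneg hfl0]
      have hfrc : frc t = t - 6 * (⌊t / 6⌋ : ℝ) := rfl
      have htl : (6*n+1 : ℝ) < t := by push_cast at hkn ⊢; rw [hfrc] at hf1; linarith
      have htu : t < (6*n+5 : ℝ) := by push_cast at hkn ⊢; rw [hfrc] at hf5; linarith
      refine Set.mem_iUnion.mpr ⟨n, (hXo n x).mpr ⟨?_, ?_⟩⟩
      · refine pow_le_dist hd0 (6*n+4) ?_
        rw [htdef] at htl; push_cast; linarith
      · refine dist_le_pow hd0 (6*n+8) ?_
        rw [htdef] at htu; push_cast; linarith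
  · -- vanishing at infinity
    intro ε hε
    apply Set.Finite.subset (hX x₀ 16)
    intro x hx
    simp only [Set.mem_setOf_eq] at hx
    rw [Metric.mem_closedBall]
    by_contra hd
    push_neg at hd
    have h2 : ¬ dist x x₀ < 2 := by push_neg; linarith
    have h16 : ¬ dist x x₀ < 16 := by push_neg; linarith
    simp only [if_neg h2, if_neg h16] at hx
    set T := Real.logb 2 (dist x x₀) + 0 with hTdef
    have hT3 : Real.logb 2 (dist x x₀) + (-3) = T - 3 := by rw [hTdef]; ring
    rw [hT3] at hx
    have hkey : g x - (lam T : ℂ) * g x - (lam (T - 3) : ℂ) * g x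
        = ((1 - (lam T + lam (T - 3)) : ℝ) : ℂ) * g x := by push_cast; ring
    rw [hkey, lam_add T] at hx
    simp at hx
    linarith
  · -- deepness even
    intro n x hx hge z hz
    obtain ⟨hx1, hx2⟩ := (hXe n x).mp hx
    have h2m : (2:ℝ) ≤ 2^(6*n+1) := by
      calc (2:ℝ) = 2^1 := (pow_one 2).symm
        _ ≤ 2^(6*n+1) := pow_le_pow_right₀ one_le_two (by omega)
    have hd2 : (2:ℝ) ≤ dist x x₀ := le_trans h2m hx1
    have hd0 : (0:ℝ) < dist x x₀ := by linarith
    simp only [if_neg (not_lt.mpr hd2), norm_mul, Complex.norm_real, Real.norm_eq_abs] at hge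
    set t := Real.logb 2 (dist x x₀) + 0 with htdef
    have hte : t = Real.logb 2 (dist x x₀) := by rw [htdef]; ring
    have hlam : 1/2 ≤ lam t := by
      have h1 := mul_le_of_le_one_right (abs_nonneg (lam t)) (hcontr x)
      calc (1:ℝ)/2 ≤ |lam t| * ‖g x‖ := hge
        _ ≤ |lam t| := h1
        _ = lam t := abs_of_nonneg (lam_nonneg t)
    obtain ⟨hfl, hfu⟩ := lam_half hlam
    have htl : ((6*n+1 : ℕ):ℝ) ≤ t := by rw [hte]; exact le_logb hx1
    have htu : t ≤ ((6*n+5 : ℕ):ℝ) := by rw [hte]; exact logb_le hd0 hx2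
    have hfloor : ⌊t / 6⌋ = (n : ℤ) := by
      rw [Int.floor_eq_iff]
      push_cast at htl htu ⊢
      constructor
      · rw [le_div_iff₀ (by norm_num : (0:ℝ) < 6)]; linarith
      · rw [div_lt_iff₀ (by norm_num : (0:ℝ) < 6)]; linarith
    have hfrc : frc t = t - 6 * (n:ℝ) := by
      simp only [frc, hfloor]; push_cast; ring
    rw [hfrc] at hfl hfu
    have hdl : (2:ℝ)^(((6*n+1 : ℕ):ℝ)+1/2) ≤ dist x x₀ := by
      refine rpow_le_d hd0 ?_
      rw [← hte]; push_cast; linarith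
    have hdu : dist x x₀ ≤ (2:ℝ)^(((6*n+4 : ℕ):ℝ)+1/2) := by
      refine d_le_rpow hd0 ?_
      rw [← hte]; push_cast; linarith
    rcases not_and_or.mp (fun h => hz ((hXe n z).mpr h)) with h | h
    · push_neg at h
      have hgap := gap_low n (6*n+1) le_rfl hdl h
      have htri := dist_triangle x z x₀
      linarith
    · push_neg at h
      have h' : (2:ℝ)^(6*n+4+1) < dist z x₀ := by
        rw [show 6*n+4+1 = 6*n+5 from by omega]; exact h
      have hgap := gap_high n (6*n+4) (by omega) hdu h'
      have htri := dist_triangle z x x₀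
      rw [dist_comm z x] at htri
      linarith
  · -- deepness odd
    intro n x hx hge z hz
    obtain ⟨hx1, hx2⟩ := (hXo n x).mp hx
    have h2m : (16:ℝ) ≤ 2^(6*n+4) := by
      calc (16:ℝ) = 2^4 := by norm_num
        _ ≤ 2^(6*n+4) := pow_le_pow_right₀ one_le_two (by omega)
    have hd2 : (16:ℝ) ≤ dist x x₀ := le_trans h2m hx1
    have hd0 : (0:ℝ) < dist x x₀ := by linarith
    simp only [if_neg (not_lt.mpr hd2), norm_mul, Complex.norm_real, Real.norm_eq_abs] at hge
    set t := Real.logb 2 (dist x x₀) + (-3) with htdef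
    have hte : t = Real.logb 2 (dist x x₀) - 3 := by rw [htdef]; ring
    have hlam : 1/2 ≤ lam t := by
      have h1 := mul_le_of_le_one_right (abs_nonneg (lam t)) (hcontr x)
      calc (1:ℝ)/2 ≤ |lam t| * ‖g x‖ := hge
        _ ≤ |lam t| := h1
        _ = lam t := abs_of_nonneg (lam_nonneg t)
    obtain ⟨hfl, hfu⟩ := lam_half hlam
    have htl : ((6*n+4 : ℕ):ℝ) ≤ t + 3 := by
      rw [hte]; have := le_logb hx1; linarith
    have htu : t + 3 ≤ ((6*n+8 : ℕ):ℝ) := by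
      rw [hte]; have := logb_le hd0 hx2; linarith
    have hfloor : ⌊t / 6⌋ = (n : ℤ) := by
      rw [Int.floor_eq_iff]
      push_cast at htl htu ⊢
      constructor
      · rw [le_div_iff₀ (by norm_num : (0:ℝ) < 6)]; linarith
      · rw [div_lt_iff₀ (by norm_num : (0:ℝ) < 6)]; linarith
    have hfrc : frc t = t - 6 * (n:ℝ) := by
      simp only [frc, hfloor]; push_cast; ring
    rw [hfrc] at hfl hfu
    have hdl : (2:ℝ)^(((6*n+4 : ℕ):ℝ)+1/2) ≤ dist x x₀ := by
      refine rpow_le_d hd0 ?_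
      have : t = Real.logb 2 (dist x x₀) - 3 := hte
      push_cast; linarith
    have hdu : dist x x₀ ≤ (2:ℝ)^(((6*n+7 : ℕ):ℝ)+1/2) := by
      refine d_le_rpow hd0 ?_
      have : t = Real.logb 2 (dist x x₀) - 3 := hte
      push_cast; linarith
    rcases not_and_or.mp (fun h => hz ((hXo n z).mpr h)) with h | h
    · push_neg at h
      have hgap := gap_low n (6*n+4) (by omega) hdl h
      have htri := dist_triangle x z x₀
      linarith
    · push_neg at h
      have h' : (2:ℝ)^(6*n+7+1) < dist z x₀ := by
        rw [show 6*n+7+1 = 6*n+8 from by omega]; exact h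
      have hgap := gap_high n (6*n+7) (by omega) hdu h'
      have htri := dist_triangle z x x₀
      rw [dist_comm z x] at htri
      linarith
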